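/- Let p be an odd prime and f : F_p → ℂ. For the quantity S = ∑_{s₁ ≠ 0} ∑_{n₂ ∈ F_p} f(s₁) conj(f(0)) conj(f(s₁−n₂)) f(−n₂) H₁(s₁, 0, 0, n₂), where H₁(s₁,s₂,n₁,n₂) = K(s₁−n₁,n₁) conj(K(s₁−n₂,n₂)) conj(K(s₂−n₁,n₁)) K(s₂−n₂,n₂) and K(a,b) = (1/p)∑_y e_p(ay²+by), one has |S| ≤ C p^{-1} ‖f‖₂⁴ for an absolute constant C. -/

import Mathlib

open Finset Complex

noncomputable def ep (p : ℕ) (x : ZMod p) : ℂ :=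
  Complex.exp (-2 * Real.pi * Complex.I * (x.val : ℂ) / p)

lemma ep_eq {p : ℕ} [NeZero p] (x : ZMod p) : ep p x = ZMod.stdAddChar (-x) := by
  rw [AddChar.map_neg_eq_inv, ZMod.stdAddChar_apply, ZMod.toCircle_apply, ← Complex.exp_neg, ep]
  congr 1
  ring

lemma ep_abs {p : ℕ} [NeZero p] (x : ZMod p) : ‖ep p x‖ = 1 := by
  rw [ep_eq, ZMod.stdAddChar_apply, Circle.norm_coe]

lemma ep_add {p : ℕ} [NeZero p] (x y : ZMod p) : ep p (x + y) = ep p x * ep p y := by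
  simp only [ep_eq, neg_add, AddChar.map_add_eq_mul]

lemma ep_zero {p : ℕ} [NeZero p] : ep p 0 = 1 := by
  simp [ep_eq]

lemma ep_conj {p : ℕ} [NeZero p] (x : ZMod p) :
    (starRingEnd ℂ) (ep p x) = ep p (-x) := by
  rw [ep_eq, ep_eq, neg_neg, ZMod.stdAddChar_apply, ZMod.stdAddChar_apply,
    ← Circle.coe_inv_eq_conj, ← AddChar.map_neg_eq_inv]
  simp

lemma ep_sum_zero {p : ℕ} [NeZero p] {c : ZMod p} (hc : c ≠ 0) :
    ∑ y : ZMod p, ep p (c * y) = 0 := by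
  have h1 : AddChar.mulShift (ZMod.stdAddChar (N := p)) (-c) ≠ 1 :=
    ZMod.isPrimitive_stdAddChar p (neg_ne_zero.mpr hc)
  have h2 := AddChar.sum_eq_zero_of_ne_one h1
  simp only [AddChar.mulShift_apply] at h2
  calc ∑ y : ZMod p, ep p (c * y) = ∑ y : ZMod p, ZMod.stdAddChar (-c * y) := by
        simp only [ep_eq, neg_mul]
    _ = 0 := h2

lemma gauss_abs {p : ℕ} [hp : Fact p.Prime] (hodd : Odd p) {a : ZMod p} (ha : a ≠ 0)
    (b : ZMod p) :
    ‖∑ y : ZMod p, ep p (a * y ^ 2 + b * y)‖ = Real.sqrt p := by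
  have h2 : (2 : ZMod p) ≠ 0 := by
    intro h
    have h' : ((2 : ℕ) : ZMod p) = 0 := by exact_mod_cast h
    have hd : p ∣ 2 := (ZMod.natCast_eq_zero_iff 2 p).mp h'
    have : p = 2 := (Nat.prime_dvd_prime_iff_eq hp.out Nat.prime_two).mp hd
    rw [this] at hodd
    exact (by norm_num : ¬ Odd 2) hodd
  set S := ∑ y : ZMod p, ep p (a * y ^ 2 + b * y) with hS
  have key : S * (starRingEnd ℂ) S = (p : ℂ) := by
    rw [hS, map_sum]
    simp_rw [ep_conj]
    rw [Finset.sum_mul_sum]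
    have step1 : ∀ y : ZMod p, ∑ z : ZMod p,
        ep p (a * y ^ 2 + b * y) * ep p (-(a * z ^ 2 + b * z)) =
        ∑ h : ZMod p, ep p (-(a * h ^ 2) - b * h) * ep p (-(2 * a * h) * y) := by
      intro y
      rw [← Fintype.sum_equiv (Equiv.addLeft y)
        (fun h => ep p (-(a * h ^ 2) - b * h) * ep p (-(2 * a * h) * y))
        (fun z => ep p (a * y ^ 2 + b * y) * ep p (-(a * z ^ 2 + b * z)))]
      intro h
      rw [← ep_add, ← ep_add]
      congr 1
      simp only [Equiv.coe_addLeft]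
      ring
    simp_rw [step1]
    rw [Finset.sum_comm]
    have step2 : ∀ h : ZMod p,
        ∑ y : ZMod p, ep p (-(a * h ^ 2) - b * h) * ep p (-(2 * a * h) * y) =
        if h = 0 then (p : ℂ) else 0 := by
      intro h
      rw [← Finset.mul_sum]
      by_cases hh : h = 0
      · subst hh
        simp [ep_zero, Finset.card_univ, ZMod.card]
      · have hc : -(2 * a * h) ≠ 0 := by
          simp only [neg_ne_zero]
          exact mul_ne_zero (mul_ne_zero h2 ha) hh
        rw [ep_sum_zero hc, mul_zero]
        simp [hh]
    simp_rw [step2]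
    simp
  have hnormSq : Complex.normSq S = p := by
    have := key
    rw [Complex.mul_conj] at this
    exact_mod_cast this
  rw [Complex.norm_def, hnormSq]

noncomputable def Kker (p : ℕ) [NeZero p] (a b : ZMod p) : ℂ :=
  (p : ℂ)⁻¹ * ∑ y : ZMod p, ep p (a * y ^ 2 + b * y)

lemma Kker_abs_le_one {p : ℕ} [NeZero p] (a b : ZMod p) :
    ‖Kker p a b‖ ≤ 1 := by
  have hp0 : (0:ℝ) < p := by exact_mod_cast Nat.pos_of_ne_zero (NeZero.ne p)
  rw [Kker, norm_mul, norm_inv, Complex.norm_natCast]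
  calc (p:ℝ)⁻¹ * ‖∑ y : ZMod p, ep p (a * y ^ 2 + b * y)‖
      ≤ (p:ℝ)⁻¹ * ∑ y : ZMod p, ‖ep p (a * y ^ 2 + b * y)‖ := by
        gcongr
        exact norm_sum_le _ _
    _ = (p:ℝ)⁻¹ * p := by simp [ep_abs, Finset.card_univ, ZMod.card]
    _ = 1 := inv_mul_cancel₀ hp0.ne'

lemma Kker_abs {p : ℕ} [hp : Fact p.Prime] (hodd : Odd p) {a : ZMod p} (ha : a ≠ 0)
    (b : ZMod p) : ‖Kker p a b‖ = (Real.sqrt p)⁻¹ := by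
  have hp0 : (0:ℝ) < p := by exact_mod_cast hp.out.pos
  have hsp : (0:ℝ) < Real.sqrt p := Real.sqrt_pos.mpr hp0
  rw [Kker, norm_mul, norm_inv, Complex.norm_natCast, gauss_abs hodd ha b]
  rw [show ((p:ℝ)) = Real.sqrt p * Real.sqrt p from (Real.mul_self_sqrt hp0.le).symm]
  field_simp
  rw [Real.sqrt_sq hsp.le]

lemma CS1 {p : ℕ} [NeZero p] (g : ZMod p → ℝ) (hN0 : 0 ≤ ∑ x : ZMod p, g x ^ 2)
    (n : ZMod p) : (∑ s : ZMod p, g s * g (s - n)) ≤ ∑ x : ZMod p, g x ^ 2 := by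
  have h := Real.sum_mul_le_sqrt_mul_sqrt Finset.univ (fun s => g s) (fun s => g (s - n))
  have he : (∑ s : ZMod p, g (s - n) ^ 2) = ∑ x : ZMod p, g x ^ 2 :=
    Fintype.sum_equiv (Equiv.subRight n) _ _ (fun s => rfl)
  rw [he, Real.mul_self_sqrt hN0] at h
  exact h

lemma CS2 {p : ℕ} [NeZero p] (g : ZMod p → ℝ) (hN0 : 0 ≤ ∑ x : ZMod p, g x ^ 2) :
    (∑ s : ZMod p, g s * g (-s)) ≤ ∑ x : ZMod p, g x ^ 2 := by
  have h := Real.sum_mul_le_sqrt_mul_sqrt Finset.univ (fun s => g s) (fun s => g (-s))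
  have he : (∑ s : ZMod p, g (-s) ^ 2) = ∑ x : ZMod p, g x ^ 2 :=
    Fintype.sum_equiv (Equiv.neg (ZMod p)) _ _ (fun s => rfl)
  rw [he, Real.mul_self_sqrt hN0] at h
  exact h

lemma CS3 {p : ℕ} [NeZero p] (g : ZMod p → ℝ) :
    (∑ n : ZMod p, g (-n)) ≤ Real.sqrt p * Real.sqrt (∑ x : ZMod p, g x ^ 2) := by
  have h := Real.sum_mul_le_sqrt_mul_sqrt Finset.univ (fun _ : ZMod p => (1:ℝ))
    (fun n => g (-n))
  have he : (∑ s : ZMod p, g (-s) ^ 2) = ∑ x : ZMod p, g x ^ 2 :=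
    Fintype.sum_equiv (Equiv.neg (ZMod p)) _ _ (fun s => rfl)
  simpa [he, Finset.card_univ, ZMod.card] using h

noncomputable def nsq (p : ℕ) [NeZero p] (f : ZMod p → ℂ) : ℝ :=
  ∑ x : ZMod p, ‖f x‖ ^ 2

noncomputable def H1 (p : ℕ) [NeZero p] (s₁ s₂ n₁ n₂ : ZMod p) : ℂ :=
  Kker p (s₁ - n₁) n₁ * (starRingEnd ℂ) (Kker p (s₁ - n₂) n₂) *
    (starRingEnd ℂ) (Kker p (s₂ - n₁) n₁) * Kker p (s₂ - n₂) n₂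

/-- Pointwise bound function. -/
noncomputable def Bnd (p : ℕ) [NeZero p] (g : ZMod p → ℝ) (s₁ n₂ : ZMod p) : ℝ :=
  (p:ℝ)⁻¹ * (Real.sqrt p)⁻¹ * (g 0 * (g s₁ * (g (s₁ - n₂) * g (-n₂)))) +
    ((if n₂ = 0 then (p:ℝ)⁻¹ * (g 0 ^ 2 * g s₁ ^ 2) else 0) +
     (if n₂ = s₁ then (p:ℝ)⁻¹ * (g 0 ^ 2 * (g s₁ * g (-s₁))) else 0))

lemma Bnd_nonneg {p : ℕ} [NeZero p] {g : ZMod p → ℝ} (hg : ∀ x, 0 ≤ g x) (s₁ n₂ : ZMod p) :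
    0 ≤ Bnd p g s₁ n₂ := by
  unfold Bnd
  have h1 : (0:ℝ) ≤ (p:ℝ)⁻¹ * (Real.sqrt p)⁻¹ * (g 0 * (g s₁ * (g (s₁ - n₂) * g (-n₂)))) := by
    have := hg 0; have := hg s₁; have := hg (s₁ - n₂); have := hg (-n₂); positivity
  have h2 : (0:ℝ) ≤ (if n₂ = 0 then (p:ℝ)⁻¹ * (g 0 ^ 2 * g s₁ ^ 2) else 0) := by
    split
    · positivity
    · exact le_refl 0
  have h3 : (0:ℝ) ≤ (if n₂ = s₁ then (p:ℝ)⁻¹ * (g 0 ^ 2 * (g s₁ * g (-s₁))) else 0) := by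
    split
    · have := hg s₁; have := hg (-s₁); positivity
    · exact le_refl 0
  linarith

lemma point_bound {p : ℕ} [hp : Fact p.Prime] (hodd : Odd p) (f : ZMod p → ℂ)
    {s₁ : ZMod p} (hs₁0 : s₁ ≠ 0) (n₂ : ZMod p) :
    ‖f s₁ * (starRingEnd ℂ) (f 0) * (starRingEnd ℂ) (f (s₁ - n₂)) * f (-n₂) *
      H1 p s₁ 0 0 n₂‖ ≤ Bnd p (fun x => ‖f x‖) s₁ n₂ := by
  set g : ZMod p → ℝ := fun x => ‖f x‖ with hgdef
  have hg : ∀ x, 0 ≤ g x := fun x => norm_nonneg _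
  have hp0 : (0:ℝ) < p := by exact_mod_cast hp.out.pos
  have hsp : (0:ℝ) < Real.sqrt p := Real.sqrt_pos.mpr hp0
  have hinv : (Real.sqrt p)⁻¹ * (Real.sqrt p)⁻¹ = (p:ℝ)⁻¹ := by
    rw [← mul_inv, Real.mul_self_sqrt hp0.le]
  have hterm : ‖f s₁ * (starRingEnd ℂ) (f 0) * (starRingEnd ℂ) (f (s₁ - n₂)) *
      f (-n₂) * H1 p s₁ 0 0 n₂‖ =
      g s₁ * g 0 * g (s₁ - n₂) * g (-n₂) * ‖H1 p s₁ 0 0 n₂‖ := by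
    simp [norm_mul, Complex.norm_conj, hgdef]
  have habsH : ‖H1 p s₁ 0 0 n₂‖ =
      ‖Kker p s₁ 0‖ * ‖Kker p (s₁ - n₂) n₂‖ *
        ‖Kker p 0 0‖ * ‖Kker p (-n₂) n₂‖ := by
    simp [H1, norm_mul, Complex.norm_conj, sub_zero, zero_sub]
  rw [hterm]
  by_cases h0 : n₂ = 0
  · subst h0
    have hH : ‖H1 p s₁ 0 0 0‖ ≤ (p:ℝ)⁻¹ := by
      rw [habsH]
      simp only [sub_zero, neg_zero]
      calc ‖Kker p s₁ 0‖ * ‖Kker p s₁ 0‖ *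
            ‖Kker p 0 0‖ * ‖Kker p 0 0‖
          ≤ (Real.sqrt p)⁻¹ * (Real.sqrt p)⁻¹ * 1 * 1 := by
            gcongr ?_ * ?_ * ?_ * ?_
            · exact le_of_eq (Kker_abs hodd hs₁0 0)
            · exact le_of_eq (Kker_abs hodd hs₁0 0)
            · exact Kker_abs_le_one _ _
            · exact Kker_abs_le_one _ _
        _ = (p:ℝ)⁻¹ := by rw [mul_one, mul_one, hinv]
    have hb : g s₁ * g 0 * g (s₁ - 0) * g (-0) * ‖H1 p s₁ 0 0 0‖ ≤
        (p:ℝ)⁻¹ * (g 0 ^ 2 * g s₁ ^ 2) := by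
      rw [sub_zero, neg_zero]
      calc g s₁ * g 0 * g s₁ * g 0 * ‖H1 p s₁ 0 0 0‖
          ≤ g s₁ * g 0 * g s₁ * g 0 * (p:ℝ)⁻¹ := by
            have := hg s₁; have := hg 0
            gcongr
        _ = (p:ℝ)⁻¹ * (g 0 ^ 2 * g s₁ ^ 2) := by ring
    have hrest : (0:ℝ) ≤
        (p:ℝ)⁻¹ * (Real.sqrt p)⁻¹ * (g 0 * (g s₁ * (g (s₁ - 0) * g (-0)))) := by
      have := hg 0; have := hg s₁; have := hg (s₁ - 0); have := hg (-0); positivity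
    unfold Bnd
    rw [if_pos rfl, if_neg (Ne.symm hs₁0)]
    linarith
  · by_cases hs : n₂ = s₁
    · subst hs
      have hn0 : -n₂ ≠ 0 := neg_ne_zero.mpr h0
      have hH : ‖H1 p n₂ 0 0 n₂‖ ≤ (p:ℝ)⁻¹ := by
        rw [habsH]
        calc ‖Kker p n₂ 0‖ * ‖Kker p (n₂ - n₂) n₂‖ *
              ‖Kker p 0 0‖ * ‖Kker p (-n₂) n₂‖
            ≤ (Real.sqrt p)⁻¹ * 1 * 1 * (Real.sqrt p)⁻¹ := by
              gcongr ?_ * ?_ * ?_ * ?_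
              · exact le_of_eq (Kker_abs hodd h0 0)
              · exact Kker_abs_le_one _ _
              · exact Kker_abs_le_one _ _
              · exact le_of_eq (Kker_abs hodd hn0 n₂)
          _ = (p:ℝ)⁻¹ := by rw [mul_one, mul_one, hinv]
      have hb : g n₂ * g 0 * g (n₂ - n₂) * g (-n₂) * ‖H1 p n₂ 0 0 n₂‖ ≤
          (p:ℝ)⁻¹ * (g 0 ^ 2 * (g n₂ * g (-n₂))) := by
        rw [sub_self]
        calc g n₂ * g 0 * g 0 * g (-n₂) * ‖H1 p n₂ 0 0 n₂‖
            ≤ g n₂ * g 0 * g 0 * g (-n₂) * (p:ℝ)⁻¹ := by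
              have := hg n₂; have := hg 0; have := hg (-n₂)
              gcongr
          _ = (p:ℝ)⁻¹ * (g 0 ^ 2 * (g n₂ * g (-n₂))) := by ring
      have hrest : (0:ℝ) ≤
          (p:ℝ)⁻¹ * (Real.sqrt p)⁻¹ * (g 0 * (g n₂ * (g (n₂ - n₂) * g (-n₂)))) := by
        have := hg 0; have := hg n₂; have := hg (n₂ - n₂); have := hg (-n₂); positivity
      unfold Bnd
      rw [if_pos rfl, if_neg h0]
      linarith
    · have hd : s₁ - n₂ ≠ 0 := sub_ne_zero_of_ne (Ne.symm hs)
      have hn0 : -n₂ ≠ 0 := neg_ne_zero.mpr h0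
      have hH : ‖H1 p s₁ 0 0 n₂‖ ≤ (p:ℝ)⁻¹ * (Real.sqrt p)⁻¹ := by
        rw [habsH]
        calc ‖Kker p s₁ 0‖ * ‖Kker p (s₁ - n₂) n₂‖ *
              ‖Kker p 0 0‖ * ‖Kker p (-n₂) n₂‖
            ≤ (Real.sqrt p)⁻¹ * (Real.sqrt p)⁻¹ * 1 * (Real.sqrt p)⁻¹ := by
              gcongr ?_ * ?_ * ?_ * ?_
              · exact le_of_eq (Kker_abs hodd hs₁0 0)
              · exact le_of_eq (Kker_abs hodd hd n₂)
              · exact Kker_abs_le_one _ _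
              · exact le_of_eq (Kker_abs hodd hn0 n₂)
          _ = (p:ℝ)⁻¹ * (Real.sqrt p)⁻¹ := by rw [mul_one, hinv]
      have hb : g s₁ * g 0 * g (s₁ - n₂) * g (-n₂) * ‖H1 p s₁ 0 0 n₂‖ ≤
          (p:ℝ)⁻¹ * (Real.sqrt p)⁻¹ * (g 0 * (g s₁ * (g (s₁ - n₂) * g (-n₂)))) := by
        calc g s₁ * g 0 * g (s₁ - n₂) * g (-n₂) * ‖H1 p s₁ 0 0 n₂‖
            ≤ g s₁ * g 0 * g (s₁ - n₂) * g (-n₂) * ((p:ℝ)⁻¹ * (Real.sqrt p)⁻¹) := by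
              have := hg s₁; have := hg 0; have := hg (s₁ - n₂); have := hg (-n₂)
              gcongr
          _ = (p:ℝ)⁻¹ * (Real.sqrt p)⁻¹ * (g 0 * (g s₁ * (g (s₁ - n₂) * g (-n₂)))) := by
              ring
      unfold Bnd
      rw [if_neg h0, if_neg hs]
      linarith

lemma sum_Bnd {p : ℕ} [hp : Fact p.Prime] (g : ZMod p → ℝ) (hg : ∀ x, 0 ≤ g x) :
    (∑ s₁ : ZMod p, ∑ n₂ : ZMod p, Bnd p g s₁ n₂) ≤
      3 * (p:ℝ)⁻¹ * (∑ x : ZMod p, g x ^ 2) ^ 2 := by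
  set N := ∑ x : ZMod p, g x ^ 2 with hN
  have hN0 : 0 ≤ N := Finset.sum_nonneg fun x _ => sq_nonneg _
  have hp0 : (0:ℝ) < p := by exact_mod_cast hp.out.pos
  have hsp : (0:ℝ) < Real.sqrt p := Real.sqrt_pos.mpr hp0
  have e1 : (Real.sqrt p)⁻¹ * Real.sqrt p = 1 := inv_mul_cancel₀ hsp.ne'
  have e2 : Real.sqrt N * Real.sqrt N = N := Real.mul_self_sqrt hN0
  have hg0N : g 0 ^ 2 ≤ N :=
    Finset.single_le_sum (f := fun x => g x ^ 2) (fun i _ => sq_nonneg _) (Finset.mem_univ 0)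
  have hg0sN : g 0 ≤ Real.sqrt N := by
    nlinarith [hg 0, Real.sqrt_nonneg N, e2]
  have hsum : (∑ s₁ : ZMod p, ∑ n₂ : ZMod p, Bnd p g s₁ n₂) =
      (∑ s₁ : ZMod p, ∑ n₂ : ZMod p,
        (p:ℝ)⁻¹ * (Real.sqrt p)⁻¹ * (g 0 * (g s₁ * (g (s₁ - n₂) * g (-n₂))))) +
      ((p:ℝ)⁻¹ * (g 0 ^ 2 * ∑ s₁ : ZMod p, g s₁ ^ 2) +
       (p:ℝ)⁻¹ * (g 0 ^ 2 * ∑ s₁ : ZMod p, g s₁ * g (-s₁))) := by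
    unfold Bnd
    simp only [Finset.sum_add_distrib, Finset.sum_ite_eq', Finset.mem_univ, if_true,
      ← Finset.mul_sum]
  have inner : ∀ n₂ : ZMod p, (∑ s₁ : ZMod p,
      (p:ℝ)⁻¹ * (Real.sqrt p)⁻¹ * (g 0 * (g s₁ * (g (s₁ - n₂) * g (-n₂))))) ≤
      (p:ℝ)⁻¹ * (Real.sqrt p)⁻¹ * g 0 * g (-n₂) * N := by
    intro n₂
    have hrw : (∑ s₁ : ZMod p,
        (p:ℝ)⁻¹ * (Real.sqrt p)⁻¹ * (g 0 * (g s₁ * (g (s₁ - n₂) * g (-n₂))))) =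
        (p:ℝ)⁻¹ * (Real.sqrt p)⁻¹ * g 0 * g (-n₂) * ∑ s₁ : ZMod p, g s₁ * g (s₁ - n₂) := by
      rw [Finset.mul_sum]
      exact Finset.sum_congr rfl fun s₁ _ => by ring
    rw [hrw]
    have := hg 0; have := hg (-n₂)
    exact mul_le_mul_of_nonneg_left (CS1 g hN0 n₂) (by positivity)
  have hT1 : (∑ s₁ : ZMod p, ∑ n₂ : ZMod p,
      (p:ℝ)⁻¹ * (Real.sqrt p)⁻¹ * (g 0 * (g s₁ * (g (s₁ - n₂) * g (-n₂))))) ≤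
      (p:ℝ)⁻¹ * N ^ 2 := by
    rw [Finset.sum_comm]
    calc (∑ n₂ : ZMod p, ∑ s₁ : ZMod p,
          (p:ℝ)⁻¹ * (Real.sqrt p)⁻¹ * (g 0 * (g s₁ * (g (s₁ - n₂) * g (-n₂)))))
        ≤ ∑ n₂ : ZMod p, (p:ℝ)⁻¹ * (Real.sqrt p)⁻¹ * g 0 * g (-n₂) * N :=
          Finset.sum_le_sum fun n₂ _ => inner n₂
      _ = (p:ℝ)⁻¹ * (Real.sqrt p)⁻¹ * g 0 * N * ∑ n₂ : ZMod p, g (-n₂) := by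
          rw [Finset.mul_sum]
          exact Finset.sum_congr rfl fun _ _ => by ring
      _ ≤ (p:ℝ)⁻¹ * (Real.sqrt p)⁻¹ * g 0 * N *
          (Real.sqrt p * Real.sqrt N) := by
          have := hg 0
          exact mul_le_mul_of_nonneg_left (CS3 g) (by positivity)
      _ ≤ (p:ℝ)⁻¹ * (Real.sqrt p)⁻¹ * Real.sqrt N * N *
          (Real.sqrt p * Real.sqrt N) := by gcongr
      _ = (p:ℝ)⁻¹ * (((Real.sqrt p)⁻¹ * Real.sqrt p) * ((Real.sqrt N * Real.sqrt N) * N)) := by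
          ring
      _ = (p:ℝ)⁻¹ * N ^ 2 := by rw [e1, e2]; ring
  have hT3 : (∑ s₁ : ZMod p, g s₁ * g (-s₁)) ≤ N := CS2 g hN0
  have hip : (0:ℝ) ≤ (p:ℝ)⁻¹ := by positivity
  have h2 : (p:ℝ)⁻¹ * (g 0 ^ 2 * ∑ s₁ : ZMod p, g s₁ ^ 2) ≤ (p:ℝ)⁻¹ * (N * N) := by
    rw [← hN]
    exact mul_le_mul_of_nonneg_left (mul_le_mul hg0N (le_refl N) hN0 hN0) hip
  have hT3nn : (0:ℝ) ≤ ∑ s₁ : ZMod p, g s₁ * g (-s₁) :=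
    Finset.sum_nonneg fun i _ => mul_nonneg (hg i) (hg (-i))
  have h3 : (p:ℝ)⁻¹ * (g 0 ^ 2 * ∑ s₁ : ZMod p, g s₁ * g (-s₁)) ≤ (p:ℝ)⁻¹ * (N * N) :=
    mul_le_mul_of_nonneg_left (mul_le_mul hg0N hT3 hT3nn hN0) hip
  rw [hsum]
  nlinarith [hT1, h2, h3]

theorem side_term_bound :
    ∃ C : ℝ, 0 < C ∧ ∀ p : ℕ, ∀ _ : Fact p.Prime, Odd p → ∀ f : ZMod p → ℂ,
      ‖∑ s₁ ∈ Finset.univ.filter (fun s₁ : ZMod p => s₁ ≠ 0), ∑ n₂ : ZMod p,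
          f s₁ * (starRingEnd ℂ) (f 0) * (starRingEnd ℂ) (f (s₁ - n₂)) * f (-n₂) *
            H1 p s₁ 0 0 n₂‖
        ≤ C * (p : ℝ)⁻¹ * nsq p f ^ 2 := by
  refine ⟨3, by norm_num, ?_⟩
  intro p hp hodd f
  have hg : ∀ x, (0:ℝ) ≤ ‖f x‖ := fun x => norm_nonneg _
  calc ‖∑ s₁ ∈ Finset.univ.filter (fun s₁ : ZMod p => s₁ ≠ 0), ∑ n₂ : ZMod p,
          f s₁ * (starRingEnd ℂ) (f 0) * (starRingEnd ℂ) (f (s₁ - n₂)) * f (-n₂) *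
            H1 p s₁ 0 0 n₂‖
      ≤ ∑ s₁ ∈ Finset.univ.filter (fun s₁ : ZMod p => s₁ ≠ 0), ‖∑ n₂ : ZMod p,
          f s₁ * (starRingEnd ℂ) (f 0) * (starRingEnd ℂ) (f (s₁ - n₂)) * f (-n₂) *
            H1 p s₁ 0 0 n₂‖ := norm_sum_le _ _
    _ ≤ ∑ s₁ ∈ Finset.univ.filter (fun s₁ : ZMod p => s₁ ≠ 0), ∑ n₂ : ZMod p, ‖f s₁ * (starRingEnd ℂ) (f 0) * (starRingEnd ℂ) (f (s₁ - n₂)) * f (-n₂) *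
            H1 p s₁ 0 0 n₂‖ := Finset.sum_le_sum fun s₁ _ => norm_sum_le _ _
    _ ≤ ∑ s₁ ∈ Finset.univ.filter (fun s₁ : ZMod p => s₁ ≠ 0), ∑ n₂ : ZMod p,
          Bnd p (fun x => ‖f x‖) s₁ n₂ :=
        Finset.sum_le_sum fun s₁ h => Finset.sum_le_sum fun n₂ _ =>
          point_bound hodd f (Finset.mem_filter.mp h).2 n₂
    _ ≤ ∑ s₁ : ZMod p, ∑ n₂ : ZMod p, Bnd p (fun x => ‖f x‖) s₁ n₂ :=
        Finset.sum_le_sum_of_subset_of_nonneg (Finset.filter_subset _ _)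
          (fun i _ _ => Finset.sum_nonneg fun j _ => Bnd_nonneg hg i j)
    _ ≤ 3 * (p:ℝ)⁻¹ * (∑ x : ZMod p, ‖f x‖ ^ 2) ^ 2 :=
        sum_Bnd (fun x => ‖f x‖) hg
    _ = 3 * (p:ℝ)⁻¹ * nsq p f ^ 2 := rfl
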